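/- Let a : ℕ → ℕ be defined by a(0) = 2 and a(n+1) = a(n)·(a(n) + 1). Then there exists a real constant c > 1 such that for every n, a(n) = ⌊c^(2^n)⌋. (This sequence gives the birthdays of the successive powers of the canonical surreal form of 2.) -/

import Mathlib

/-- The sequence `a 0 = 2`, `a (n+1) = a n * (a n + 1)` of birthdays of powers of the
canonical surreal form of 2. -/
def birthdaySeq : ℕ → ℕ
  | 0 => 2
  | n + 1 => birthdaySeq n * (birthdaySeq n + 1)

namespace BSaux

noncomputable def A (n : ℕ) : ℝ := (birthdaySeq n : ℝ)

lemma A_rec (n : ℕ) : A (n + 1) = A n * (A n + 1) := by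
  simp only [A, birthdaySeq]
  push_cast
  ring

lemma two_le_A (n : ℕ) : 2 ≤ A n := by
  induction n with
  | zero => norm_num [A, birthdaySeq]
  | succ n ih => rw [A_rec]; nlinarith

lemma A_pos (n : ℕ) : 0 < A n := lt_of_lt_of_le (by norm_num) (two_le_A n)

lemma sq_le (n : ℕ) : A n ^ 2 ≤ A (n + 1) := by
  have := A_rec n; have := two_le_A n; nlinarith

lemma succ_lt (n : ℕ) : A (n + 1) + 1 < (A n + 1) ^ 2 := by
  have := A_rec n; have := two_le_A n; nlinarith

lemma pow_le (n k : ℕ) : A n ^ 2 ^ k ≤ A (n + k) := by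
  induction k with
  | zero => simp
  | succ k ih =>
    have h1 : A n ^ 2 ^ (k + 1) = (A n ^ 2 ^ k) ^ 2 := by
      rw [pow_succ, pow_mul]
    rw [h1]
    calc (A n ^ 2 ^ k) ^ 2 ≤ A (n + k) ^ 2 := by
          apply pow_le_pow_left₀ (pow_nonneg (A_pos n).le _) ih
      _ ≤ A (n + k + 1) := sq_le _
      _ = A (n + (k + 1)) := by ring_nf

lemma add_one_pow_le (n k : ℕ) : A (n + k) + 1 ≤ (A n + 1) ^ 2 ^ k := by
  induction k with
  | zero => simp
  | succ k ih =>
    have h1 : (A n + 1) ^ 2 ^ (k + 1) = ((A n + 1) ^ 2 ^ k) ^ 2 := by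
      rw [pow_succ, pow_mul]
    rw [h1]
    have h2 : A (n + (k + 1)) + 1 < (A (n + k) + 1) ^ 2 := by
      have := succ_lt (n + k); rw [show n + k + 1 = n + (k + 1) by ring] at this
      exact this
    have h3 : (A (n + k) + 1) ^ 2 ≤ ((A n + 1) ^ 2 ^ k) ^ 2 := by
      apply pow_le_pow_left₀ (by have := A_pos (n + k); linarith) ih
    linarith

noncomputable def b (n : ℕ) : ℝ := A n ^ (((2 : ℝ) ^ n)⁻¹)

lemma b_pos (n : ℕ) : 0 < b n := Real.rpow_pos_of_pos (A_pos n) _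

lemma two_pow_pos (n : ℕ) : (0 : ℝ) < 2 ^ n := by positivity

/-- raising a nat-power to an rpow exponent -/
lemma pow_rpow (x : ℝ) (hx : 0 ≤ x) (k : ℕ) (y : ℝ) :
    (x ^ k) ^ y = x ^ ((k : ℝ) * y) := by
  rw [Real.rpow_mul hx, Real.rpow_natCast]

lemma b_mono : Monotone b := by
  apply monotone_nat_of_le_succ
  intro n
  have he : (((2 : ℕ) : ℝ)) * ((2 : ℝ) ^ (n + 1))⁻¹ = ((2 : ℝ) ^ n)⁻¹ := by
    push_cast
    rw [pow_succ]
    field_simp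
  have h1 : b n = (A n ^ 2) ^ (((2 : ℝ) ^ (n + 1))⁻¹) := by
    rw [pow_rpow _ (A_pos n).le, he, b]
  rw [h1, b]
  exact Real.rpow_le_rpow (by positivity) (sq_le n) (by positivity)

lemma b_le (n : ℕ) : b n ≤ 3 := by
  have h1 : b n ≤ (A n + 1) ^ (((2 : ℝ) ^ n)⁻¹) :=
    Real.rpow_le_rpow (A_pos n).le (by linarith) (by positivity)
  have h2 : A n + 1 ≤ (A 0 + 1) ^ 2 ^ n := by
    have := add_one_pow_le 0 n; simpa using this
  have h3 : (A n + 1) ^ (((2 : ℝ) ^ n)⁻¹) ≤ ((A 0 + 1) ^ 2 ^ n) ^ (((2 : ℝ) ^ n)⁻¹) :=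
    Real.rpow_le_rpow (by have := A_pos n; linarith) h2 (by positivity)
  have h4 : ((A 0 + 1) ^ 2 ^ n) ^ (((2 : ℝ) ^ n)⁻¹) = A 0 + 1 := by
    rw [pow_rpow _ (by have := A_pos 0; linarith)]
    rw [show ((2 ^ n : ℕ) : ℝ) * ((2 : ℝ) ^ n)⁻¹ = 1 by push_cast; field_simp]
    exact Real.rpow_one _
  have hA0 : A 0 = 2 := by norm_num [A, birthdaySeq]
  rw [h4, hA0] at h3
  linarith [h1.trans h3]

lemma bdd : BddAbove (Set.range b) := ⟨3, by rintro x ⟨n, rfl⟩; exact b_le n⟩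

noncomputable def c : ℝ := ⨆ n, b n

lemma b_le_c (n : ℕ) : b n ≤ c := le_ciSup bdd n

lemma one_lt_c : 1 < c := by
  have h0 : b 0 = 2 := by
    simp [b, A, birthdaySeq]
  have := b_le_c 0
  rw [h0] at this
  linarith

lemma c_pos : 0 < c := by linarith [one_lt_c]

lemma c_pow_eq (n : ℕ) : c ^ (2 ^ n : ℕ) = c ^ ((2 : ℝ) ^ n) := by
  rw [← Real.rpow_natCast c (2 ^ n)]
  norm_num

lemma lower (n : ℕ) : A n ≤ c ^ (2 ^ n : ℕ) := by
  rw [c_pow_eq]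
  have h1 : b n ^ ((2 : ℝ) ^ n) ≤ c ^ ((2 : ℝ) ^ n) :=
    Real.rpow_le_rpow (b_pos n).le (b_le_c n) (by positivity)
  have h2 : b n ^ ((2 : ℝ) ^ n) = A n := by
    rw [b, ← Real.rpow_mul (A_pos n).le]
    rw [inv_mul_cancel₀ (by positivity : ((2:ℝ)^n) ≠ 0)]
    exact Real.rpow_one _
  rw [h2] at h1
  exact h1

lemma c_le_u (n : ℕ) : c ≤ (A (n + 1) + 1) ^ (((2 : ℝ) ^ (n + 1))⁻¹) := by
  apply ciSup_le
  intro m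
  rcases le_or_gt m (n + 1) with hm | hm
  · calc b m ≤ b (n + 1) := b_mono hm
      _ ≤ (A (n + 1) + 1) ^ (((2 : ℝ) ^ (n + 1))⁻¹) :=
        Real.rpow_le_rpow (A_pos _).le (by linarith) (by positivity)
  · obtain ⟨k, rfl⟩ := Nat.exists_eq_add_of_le hm.le
    have h1 : b (n + 1 + k) ≤ (A (n + 1 + k) + 1) ^ (((2 : ℝ) ^ (n + 1 + k))⁻¹) :=
      Real.rpow_le_rpow (A_pos _).le (by linarith) (by positivity)
    have h2 : A (n + 1 + k) + 1 ≤ (A (n + 1) + 1) ^ 2 ^ k := add_one_pow_le (n + 1) k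
    have h3 : (A (n + 1 + k) + 1) ^ (((2 : ℝ) ^ (n + 1 + k))⁻¹) ≤
        ((A (n + 1) + 1) ^ 2 ^ k) ^ (((2 : ℝ) ^ (n + 1 + k))⁻¹) :=
      Real.rpow_le_rpow (by have := A_pos (n + 1 + k); linarith) h2 (by positivity)
    have h4 : ((A (n + 1) + 1) ^ 2 ^ k) ^ (((2 : ℝ) ^ (n + 1 + k))⁻¹) =
        (A (n + 1) + 1) ^ (((2 : ℝ) ^ (n + 1))⁻¹) := by
      rw [pow_rpow _ (by have := A_pos (n + 1); linarith)]
      congr 1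
      push_cast
      rw [pow_add]
      field_simp
    rw [h4] at h3
    exact h1.trans h3

lemma upper (n : ℕ) : c ^ (2 ^ n : ℕ) < A n + 1 := by
  rw [c_pow_eq]
  have h1 : c ^ ((2 : ℝ) ^ n) ≤
      ((A (n + 1) + 1) ^ (((2 : ℝ) ^ (n + 1))⁻¹)) ^ ((2 : ℝ) ^ n) :=
    Real.rpow_le_rpow c_pos.le (c_le_u n) (by positivity)
  have h2 : ((A (n + 1) + 1) ^ (((2 : ℝ) ^ (n + 1))⁻¹)) ^ ((2 : ℝ) ^ n) =
      (A (n + 1) + 1) ^ ((2 : ℝ)⁻¹) := by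
    rw [← Real.rpow_mul (by have := A_pos (n + 1); linarith)]
    congr 1
    rw [pow_succ]
    field_simp
  have h3 : (A (n + 1) + 1) ^ ((2 : ℝ)⁻¹) < ((A n + 1) ^ 2) ^ ((2 : ℝ)⁻¹) :=
    Real.rpow_lt_rpow (by have := A_pos (n + 1); linarith) (succ_lt n) (by norm_num)
  have h4 : ((A n + 1) ^ 2) ^ ((2 : ℝ)⁻¹) = A n + 1 := by
    rw [pow_rpow _ (by have := A_pos n; linarith)]
    norm_num
  rw [h2] at h1
  rw [h4] at h3
  linarith

end BSaux

theorem birthdaySeq_eq_floor_pow :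
    ∃ c : ℝ, 1 < c ∧ ∀ n : ℕ, (birthdaySeq n : ℤ) = ⌊c ^ (2 ^ n)⌋ := by
  refine ⟨BSaux.c, BSaux.one_lt_c, fun n => ?_⟩
  symm
  rw [Int.floor_eq_iff]
  constructor
  · push_cast
    exact BSaux.lower n
  · push_cast
    exact BSaux.upper n
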